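/- Fix an integer q ≥ 2 and let X = (X_k)_{k∈ℕ} be a sequence of independent integrable real random variables with E[X_k] = 0 for every k and such that no X_k is almost surely constant. Let d > q be an integer. Suppose (F_n)_{n≥1} is a sequence of random variables of the form F_n = E[F_n] + Σ_{p=1}^q Q_p(f_{p,n}; X), where each f_{p,n} is a kernel of order p whose support is contained in {1,…,d}^p, and suppose F_n converges almost surely to a random variable F of the form F = E[F] + Σ_{p=1}^q Q_p(f_p; X) with each f_p a kernel of order p supported in {1,…,d}^p. Then, as n → ∞, E[F_n] → E[F], and for each p ∈ {1,…,q}, Q_p(f_{p,n}; X) converges almost surely to Q_p(f_p; X). -/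

import Mathlib

open MeasureTheory ProbabilityTheory Filter
open scoped ENNReal NNReal

/-- A kernel of order `p`: a function on `p`-tuples of indices that is symmetric in its
arguments and vanishes on diagonals. -/
def IsKernel {p : ℕ} (f : (Fin p → ℕ) → ℝ) : Prop :=
  (∀ (σ : Equiv.Perm (Fin p)) (i : Fin p → ℕ), f (i ∘ σ) = f i) ∧
  (∀ i : Fin p → ℕ, ¬ Function.Injective i → f i = 0)

/-- The homogeneous sum `Q_p(f; X) = ∑_{i₁,…,i_p} f(i₁,…,i_p) X_{i₁} ⋯ X_{i_p}` for a kernel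
`f` supported on indices `< d`; it is the finite sum over indices in `{0, …, d-1}`. -/
noncomputable def homSum {Ω : Type*} (p d : ℕ) (f : (Fin p → ℕ) → ℝ)
    (X : ℕ → Ω → ℝ) (ω : Ω) : ℝ :=
  ∑ i : Fin p → Fin d, f (fun k => (i k : ℕ)) * ∏ k, X (i k : ℕ) ω

section Aux

variable {Ω : Type*} [MeasurableSpace Ω] {μ : Measure Ω} [IsProbabilityMeasure μ]

lemma indep_prod_integral (Y : ℕ → Ω → ℝ)
    (hind : iIndepFun Y μ) (hmeas : ∀ j, Measurable (Y j))
    (hint : ∀ j, Integrable (Y j) μ) (s : Finset ℕ) :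
    Integrable (fun ω => ∏ j ∈ s, Y j ω) μ ∧
      (∫ ω, ∏ j ∈ s, Y j ω ∂μ) = ∏ j ∈ s, ∫ ω, Y j ω ∂μ := by
  classical
  induction s using Finset.induction_on with
  | empty => simp
  | @insert j s hj ih =>
    have hIndep : IndepFun (∏ k ∈ s, Y k) (Y j) μ :=
      hind.indepFun_finsetProd_of_notMem hmeas hj
    have hprodint : Integrable (∏ k ∈ s, Y k) μ := by
      have := ih.1
      have heq : (fun ω => ∏ k ∈ s, Y k ω) = ∏ k ∈ s, Y k := by
        funext ω; simp [Finset.prod_apply]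
      rwa [heq] at this
    have hmul : Integrable ((∏ k ∈ s, Y k) * Y j) μ := hIndep.integrable_mul hprodint (hint j)
    have heq2 : (fun ω => ∏ k ∈ insert j s, Y k ω) = (∏ k ∈ s, Y k) * Y j := by
      funext ω; simp [Finset.prod_insert hj, Finset.prod_apply, mul_comm]
    constructor
    · rw [heq2]; exact hmul
    · calc (∫ ω, ∏ k ∈ insert j s, Y k ω ∂μ) = ∫ ω, ((∏ k ∈ s, Y k) * Y j) ω ∂μ := by
            rw [← heq2]
        _ = (∫ ω, (∏ k ∈ s, Y k) ω ∂μ) * ∫ ω, Y j ω ∂μ :=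
            hIndep.integral_mul_eq_mul_integral hprodint.aestronglyMeasurable (hint j).aestronglyMeasurable
        _ = (∏ k ∈ s, ∫ ω, Y k ω ∂μ) * ∫ ω, Y j ω ∂μ := by
            rw [show (∫ ω, (∏ k ∈ s, Y k) ω ∂μ) = ∫ ω, ∏ k ∈ s, Y k ω ∂μ from by
              simp [Finset.prod_apply]]
            rw [ih.2]
        _ = ∏ k ∈ insert j s, ∫ ω, Y k ω ∂μ := by rw [Finset.prod_insert hj]; ring

end Aux

noncomputable def phi0 : ℝ → ℝ := fun x => if 0 < x then 1 else 0

lemma phi0_meas : Measurable phi0 :=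
  Measurable.ite measurableSet_Ioi measurable_const measurable_const

lemma phi0_mul_self (x : ℝ) : phi0 x * x = max x 0 := by
  unfold phi0
  by_cases h : 0 < x
  · simp [h, max_eq_left h.le]
  · simp [h, max_eq_right (le_of_not_gt h)]

noncomputable def psi {Ω : Type*} [MeasurableSpace Ω] (μ : Measure Ω) (X : ℕ → Ω → ℝ)
    (j : ℕ) : ℝ → ℝ :=
  fun x => phi0 x - (∫ ω, phi0 (X j ω) ∂μ)

noncomputable def aval {Ω : Type*} [MeasurableSpace Ω] (μ : Measure Ω) (X : ℕ → Ω → ℝ)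
    (j : ℕ) : ℝ :=
  ∫ ω, psi μ X j (X j ω) * X j ω ∂μ

section Main

variable {Ω : Type*} [MeasurableSpace Ω] {μ : Measure Ω} [IsProbabilityMeasure μ]
  {X : ℕ → Ω → ℝ}

lemma psi_meas (j : ℕ) : Measurable (psi μ X j) := phi0_meas.sub measurable_const

lemma phi0_comp_int (hmeas : ∀ k, Measurable (X k)) (j : ℕ) :
    Integrable (fun ω => phi0 (X j ω)) μ := by
  have heq : (fun ω => phi0 (X j ω)) = Set.indicator {ω | 0 < X j ω} (fun _ => (1:ℝ)) := by
    funext ω; simp [phi0, Set.indicator_apply, Set.mem_setOf_eq]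
  rw [heq]
  exact (integrable_const 1).indicator (measurableSet_lt measurable_const (hmeas j))

lemma psi_comp_int (hmeas : ∀ k, Measurable (X k)) (j : ℕ) :
    Integrable (fun ω => psi μ X j (X j ω)) μ :=
  (phi0_comp_int hmeas j).sub (integrable_const _)

lemma psi_mean (hmeas : ∀ k, Measurable (X k)) (j : ℕ) :
    (∫ ω, psi μ X j (X j ω) ∂μ) = 0 := by
  unfold psi
  rw [integral_sub (phi0_comp_int hmeas j) (integrable_const _), integral_const]
  simp

lemma psiX_eq (j : ℕ) :
    (fun ω => psi μ X j (X j ω) * X j ω)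
      = fun ω => max (X j ω) 0 - (∫ ω', phi0 (X j ω') ∂μ) * X j ω := by
  funext ω
  unfold psi
  rw [sub_mul, phi0_mul_self]

lemma psiX_int (hint : ∀ k, Integrable (X k) μ) (j : ℕ) :
    Integrable (fun ω => psi μ X j (X j ω) * X j ω) μ := by
  rw [psiX_eq]
  exact ((hint j).pos_part).sub (((hint j).const_mul _))

lemma aval_eq (hint : ∀ k, Integrable (X k) μ) (hmean : ∀ k, (∫ ω, X k ω ∂μ) = 0) (j : ℕ) :
    aval μ X j = ∫ ω, max (X j ω) 0 ∂μ := by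
  unfold aval
  rw [psiX_eq, integral_sub ((hint j).pos_part) ((hint j).const_mul _),
    integral_const_mul, hmean j, mul_zero, sub_zero]

lemma aval_ne (hint : ∀ k, Integrable (X k) μ) (hmean : ∀ k, (∫ ω, X k ω ∂μ) = 0)
    (hnondeg : ∀ k, ¬ ∃ c : ℝ, X k =ᵐ[μ] fun _ => c) (j : ℕ) : aval μ X j ≠ 0 := by
  intro h0
  rw [aval_eq hint hmean] at h0
  have h1 : (fun ω => max (X j ω) 0) =ᵐ[μ] 0 :=
    (integral_eq_zero_iff_of_nonneg (fun ω => le_max_right _ _) (hint j).pos_part).mp h0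
  have h2eq : (fun ω => max (-X j ω) 0) = fun ω => max (X j ω) 0 - X j ω := by
    funext ω
    rcases le_or_gt 0 (X j ω) with h | h
    · rw [max_eq_left h, max_eq_right (by linarith), sub_self]
    · rw [max_eq_left (by linarith), max_eq_right h.le, zero_sub]
  have h2int : Integrable (fun ω => max (-X j ω) 0) μ := by
    rw [h2eq]; exact (hint j).pos_part.sub (hint j)
  have h2zero : (∫ ω, max (-X j ω) 0 ∂μ) = 0 := by
    rw [h2eq, integral_sub ((hint j).pos_part) (hint j), hmean j, sub_zero, h0]
  have h2 : (fun ω => max (-X j ω) 0) =ᵐ[μ] 0 :=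
    (integral_eq_zero_iff_of_nonneg (fun ω => le_max_right _ _) h2int).mp h2zero
  refine hnondeg j ⟨0, ?_⟩
  filter_upwards [h1, h2] with ω e1 e2
  have := max_zero_sub_max_neg_zero_eq_self (X j ω)
  simp only [Pi.zero_apply] at e1 e2
  simp only [e1, e2] at this
  simpa using this.symm

lemma key_integral (hXindep : iIndepFun X μ)
    (hmeas : ∀ k, Measurable (X k)) (hint : ∀ k, Integrable (X k) μ)
    (hmean : ∀ k, (∫ ω, X k ω ∂μ) = 0) (u v : Finset ℕ) :
    Integrable (fun ω => (∏ j ∈ u, psi μ X j (X j ω)) * ∏ j ∈ v, X j ω) μ ∧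
      (∫ ω, (∏ j ∈ u, psi μ X j (X j ω)) * ∏ j ∈ v, X j ω ∂μ)
        = if u = v then ∏ j ∈ u, aval μ X j else 0 := by
  classical
  set g : ℕ → ℝ → ℝ :=
    fun j x => (if j ∈ u then psi μ X j x else 1) * (if j ∈ v then x else 1) with hgdef
  have hgmeas : ∀ j, Measurable (g j) := by
    intro j
    by_cases h : j ∈ u <;> by_cases h' : j ∈ v <;>
      simp only [hgdef, h, h', if_true, if_false, mul_one, one_mul]
    · exact (psi_meas j).mul measurable_id
    · exact psi_meas j
    · exact measurable_id
    · exact measurable_const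
  have hYind : iIndepFun (fun j => g j ∘ X j) μ :=
    hXindep.comp g hgmeas
  have hYmeas : ∀ j, Measurable (g j ∘ X j) := fun j => (hgmeas j).comp (hmeas j)
  have hYint : ∀ j, Integrable (g j ∘ X j) μ := by
    intro j
    by_cases h : j ∈ u <;> by_cases h' : j ∈ v <;>
      simp only [Function.comp_def, hgdef, h, h', if_true, if_false, mul_one, one_mul]
    · exact psiX_int hint j
    · exact psi_comp_int hmeas j
    · exact hint j
    · exact integrable_const 1
  obtain ⟨hI, hE⟩ := indep_prod_integral _ hYind hYmeas hYint (u ∪ v)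
  have hpt : ∀ ω, (∏ j ∈ u ∪ v, (g j ∘ X j) ω)
      = (∏ j ∈ u, psi μ X j (X j ω)) * ∏ j ∈ v, X j ω := by
    intro ω
    simp only [Function.comp_apply, hgdef]
    rw [Finset.prod_mul_distrib, Finset.prod_ite_mem, Finset.prod_ite_mem,
      Finset.union_inter_cancel_left, Finset.union_inter_cancel_right]
  have hfun : (fun ω => ∏ j ∈ u ∪ v, (g j ∘ X j) ω)
      = fun ω => (∏ j ∈ u, psi μ X j (X j ω)) * ∏ j ∈ v, X j ω := funext hpt
  rw [hfun] at hI hE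
  refine ⟨hI, ?_⟩
  rw [hE]
  have hj_int : ∀ j, (∫ ω, (g j ∘ X j) ω ∂μ)
      = if j ∈ u then (if j ∈ v then aval μ X j else 0) else (if j ∈ v then 0 else 1) := by
    intro j
    by_cases h : j ∈ u <;> by_cases h' : j ∈ v <;>
      simp only [Function.comp_apply, hgdef, h, h', if_true, if_false, mul_one, one_mul]
    · rfl
    · exact psi_mean hmeas j
    · exact hmean j
    · simp
  by_cases huv : u = v
  · subst huv
    rw [if_pos rfl, Finset.union_self]
    refine Finset.prod_congr rfl fun j hj => ?_
    rw [hj_int j, if_pos hj, if_pos hj]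
  · rw [if_neg huv]
    have : ¬(u ⊆ v) ∨ ¬(v ⊆ u) := by
      by_contra hc
      push_neg at hc
      exact huv (Finset.Subset.antisymm hc.1 hc.2)
    rcases this with h | h
    · obtain ⟨j, hju, hjv⟩ := Finset.not_subset.mp h
      refine Finset.prod_eq_zero (Finset.mem_union_left _ hju) ?_
      rw [hj_int j, if_pos hju, if_neg hjv]
    · obtain ⟨j, hjv, hju⟩ := Finset.not_subset.mp h
      refine Finset.prod_eq_zero (Finset.mem_union_right _ hjv) ?_
      rw [hj_int j, if_neg hju, if_pos hjv]

end Main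
section LA

lemma exists_perm_comp {p : ℕ} {g g' : Fin p → ℕ} (hg : Function.Injective g)
    (hg' : Function.Injective g')
    (h : Finset.image g Finset.univ = Finset.image g' Finset.univ) :
    ∃ σ : Equiv.Perm (Fin p), g' = g ∘ σ := by
  have hr : Set.range g = Set.range g' := by
    have := congrArg (fun (s : Finset ℕ) => (s : Set ℕ)) h
    simpa [Finset.coe_image, Set.image_univ] using this
  refine ⟨(Equiv.ofInjective g' hg').trans ((Equiv.setCongr hr.symm).trans
    (Equiv.ofInjective g hg).symm), ?_⟩
  funext k
  simp only [Function.comp_apply, Equiv.trans_apply, Equiv.setCongr_apply]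
  rw [Equiv.apply_ofInjective_symm hg]
  rfl

abbrev Wsp (q d : ℕ) : Type :=
  ℝ × (∀ p : (Finset.Icc 1 q : Finset ℕ), (Fin (p : ℕ) → Fin d) → ℝ)

noncomputable def LWfun {Ω : Type*} (q d : ℕ) (X : ℕ → Ω → ℝ) (x : Wsp q d) (ω : Ω) : ℝ :=
  x.1 + ∑ p : (Finset.Icc 1 q : Finset ℕ), ∑ i : Fin (p : ℕ) → Fin d,
    x.2 p i * ∏ k, X (i k : ℕ) ω

noncomputable def evW {Ω : Type*} (q d : ℕ) (X : ℕ → Ω → ℝ) (ω : Ω) : Wsp q d →ₗ[ℝ] ℝ where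
  toFun x := LWfun q d X x ω
  map_add' x y := by
    simp only [LWfun, Prod.fst_add, Prod.snd_add, Pi.add_apply, add_mul,
      Finset.sum_add_distrib]
    ring
  map_smul' c x := by
    simp only [LWfun, Prod.smul_fst, Prod.smul_snd, Pi.smul_apply, smul_eq_mul,
      RingHom.id_apply, mul_add, Finset.mul_sum, mul_assoc]

def Usub (q d : ℕ) : Submodule ℝ (Wsp q d) where
  carrier := {x | ∀ p : (Finset.Icc 1 q : Finset ℕ),
    (∀ σ : Equiv.Perm (Fin (p : ℕ)), ∀ i, x.2 p (i ∘ σ) = x.2 p i) ∧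
    (∀ i : Fin (p : ℕ) → Fin d, ¬ Function.Injective i → x.2 p i = 0)}
  add_mem' := by
    intro a b ha hb p
    refine ⟨fun σ i => ?_, fun i hi => ?_⟩
    · simp only [Prod.snd_add, Pi.add_apply, (ha p).1 σ i, (hb p).1 σ i]
    · simp only [Prod.snd_add, Pi.add_apply, (ha p).2 i hi, (hb p).2 i hi, add_zero]
  zero_mem' := by intro p; simp
  smul_mem' := by
    intro c a ha p
    refine ⟨fun σ i => ?_, fun i hi => ?_⟩
    · simp only [Prod.smul_snd, Pi.smul_apply, (ha p).1 σ i]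
    · simp only [Prod.smul_snd, Pi.smul_apply, (ha p).2 i hi, smul_zero]

example (q d : ℕ) : FiniteDimensional ℝ (Wsp q d) := inferInstance
example (q d : ℕ) : FiniteDimensional ℝ ↥(Usub q d) := inferInstance

end LA

section Inj

variable {Ω : Type*} [MeasurableSpace Ω] {μ : Measure Ω} [IsProbabilityMeasure μ]
  {X : ℕ → Ω → ℝ}

lemma inj_lemma (hXindep : iIndepFun X μ)
    (hmeas : ∀ k, Measurable (X k)) (hint : ∀ k, Integrable (X k) μ)
    (hmean : ∀ k, (∫ ω, X k ω ∂μ) = 0)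
    (hnondeg : ∀ k, ¬ ∃ c : ℝ, X k =ᵐ[μ] fun _ => c)
    (q d : ℕ) (x : Wsp q d) (hx : x ∈ Usub q d)
    (h0 : ∀ᵐ ω ∂μ, LWfun q d X x ω = 0) : x = 0 := by
  classical
  set Phi : Finset ℕ → Ω → ℝ := fun u ω => ∏ j ∈ u, psi μ X j (X j ω) with hPhidef
  have hkey := fun u v => key_integral (μ := μ) (X := X) hXindep hmeas hint hmean u v
  -- integrals of Phi against monomials
  have hmono : ∀ (u : Finset ℕ) (p : ℕ) (i : Fin p → Fin d), Function.Injective i →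
      Integrable (fun ω => Phi u ω * ∏ k, X (i k : ℕ) ω) μ ∧
      (∫ ω, Phi u ω * ∏ k, X (i k : ℕ) ω ∂μ)
        = (if u = Finset.image (fun k => (i k : ℕ)) Finset.univ
            then ∏ j ∈ u, aval μ X j else 0) := by
    intro u p i hi
    have hvi : Function.Injective fun k => (i k : ℕ) := Fin.val_injective.comp hi
    have hprod : ∀ ω, (∏ j ∈ Finset.image (fun k => (i k : ℕ)) Finset.univ, X j ω)
        = ∏ k, X (i k : ℕ) ω := fun ω =>
      Finset.prod_image (fun a _ b _ hab => hvi hab)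
    obtain ⟨hI, hE⟩ := hkey u (Finset.image (fun k => (i k : ℕ)) Finset.univ)
    have hfun : (fun ω => Phi u ω * ∏ j ∈ Finset.image (fun k => (i k : ℕ)) Finset.univ, X j ω)
        = fun ω => Phi u ω * ∏ k, X (i k : ℕ) ω := by
      funext ω; rw [hprod ω]
    rw [hfun] at hI hE
    exact ⟨hI, hE⟩
  -- integral of Phi alone
  have hPhiInt : ∀ u : Finset ℕ, Integrable (Phi u) μ ∧
      ((∫ ω, Phi u ω ∂μ) = if u = ∅ then 1 else 0) := by
    intro u
    obtain ⟨hI, hE⟩ := hkey u ∅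
    simp only [Finset.prod_empty, mul_one] at hI hE
    refine ⟨hI, ?_⟩
    rw [hE]
    by_cases h : u = ∅ <;> simp [h]
  -- the master identity
  have master : ∀ u : Finset ℕ,
      x.1 * (if u = ∅ then 1 else 0)
        + ∑ p : (Finset.Icc 1 q : Finset ℕ), ∑ i : Fin (p : ℕ) → Fin d,
            x.2 p i * (if Function.Injective i ∧
                u = Finset.image (fun k => (i k : ℕ)) Finset.univ
              then ∏ j ∈ u, aval μ X j else 0) = 0 := by
    intro u
    have hzero : (∫ ω, Phi u ω * LWfun q d X x ω ∂μ) = 0 := by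
      have hae : (fun ω => Phi u ω * LWfun q d X x ω) =ᵐ[μ] 0 := h0.mono fun ω h => by
        simp [h]
      rw [integral_congr_ae hae]; simp
    have hterm_int : ∀ (p : (Finset.Icc 1 q : Finset ℕ)) (i : Fin (p : ℕ) → Fin d),
        Integrable (fun ω => x.2 p i * (Phi u ω * ∏ k, X (i k : ℕ) ω)) μ := by
      intro p i
      by_cases hc : x.2 p i = 0
      · simpa [hc] using integrable_const (0 : ℝ)
      · have hi : Function.Injective i := by
          by_contra hni; exact hc ((hx p).2 i hni)
        exact ((hmono u (p : ℕ) i hi).1).const_mul _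
    have hexp : (fun ω => Phi u ω * LWfun q d X x ω)
        = fun ω => x.1 * Phi u ω + ∑ p : (Finset.Icc 1 q : Finset ℕ),
            ∑ i : Fin (p : ℕ) → Fin d, x.2 p i * (Phi u ω * ∏ k, X (i k : ℕ) ω) := by
      funext ω
      rw [LWfun, mul_add]
      congr 1
      · ring
      · rw [Finset.mul_sum]
        refine Finset.sum_congr rfl fun p _ => ?_
        rw [Finset.mul_sum]
        refine Finset.sum_congr rfl fun i _ => ?_
        ring
    rw [hexp] at hzero
    rw [integral_add ((hPhiInt u).1.const_mul _)
        (integrable_finset_sum _ fun p _ => integrable_finset_sum _ fun i _ => hterm_int p i),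
      integral_finset_sum _ (fun p _ => integrable_finset_sum _ fun i _ => hterm_int p i)]
      at hzero
    have e1 : (∫ a, x.1 * Phi u a ∂μ) = x.1 * (if u = ∅ then 1 else 0) := by
      rw [integral_const_mul, (hPhiInt u).2]
    have e2 : (∑ p : (Finset.Icc 1 q : Finset ℕ),
          ∫ a, ∑ i : Fin (p : ℕ) → Fin d, x.2 p i * (Phi u a * ∏ k, X (i k : ℕ) a) ∂μ)
        = ∑ p : (Finset.Icc 1 q : Finset ℕ), ∑ i : Fin (p : ℕ) → Fin d,
            x.2 p i * (if Function.Injective i ∧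
                u = Finset.image (fun k => (i k : ℕ)) Finset.univ
              then ∏ j ∈ u, aval μ X j else 0) := by
      refine Finset.sum_congr rfl fun p _ => ?_
      rw [integral_finset_sum _ (fun i _ => hterm_int p i)]
      refine Finset.sum_congr rfl fun i _ => ?_
      by_cases hc : x.2 p i = 0
      · simp [hc]
      · have hi : Function.Injective i := by
          by_contra hni; exact hc ((hx p).2 i hni)
        rw [integral_const_mul, (hmono u (p : ℕ) i hi).2]
        congr 1
        simp [hi]
    rw [e1, e2] at hzero
    exact hzero
  -- first coordinate vanishes
  have hx1 : x.1 = 0 := by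
    have h := master ∅
    rw [if_pos rfl, mul_one] at h
    have hz : ∑ p : (Finset.Icc 1 q : Finset ℕ), ∑ i : Fin (p : ℕ) → Fin d,
        x.2 p i * (if Function.Injective i ∧
            (∅ : Finset ℕ) = Finset.image (fun k => (i k : ℕ)) Finset.univ
          then ∏ j ∈ (∅ : Finset ℕ), aval μ X j else 0) = 0 := by
      refine Finset.sum_eq_zero fun p _ => Finset.sum_eq_zero fun i _ => ?_
      have hp1 : 1 ≤ (p : ℕ) := (Finset.mem_Icc.mp p.2).1
      haveI : Nonempty (Fin (p : ℕ)) := ⟨⟨0, lt_of_lt_of_le zero_lt_one hp1⟩⟩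
      have hne : ¬ (Function.Injective i ∧
          (∅ : Finset ℕ) = Finset.image (fun k => (i k : ℕ)) Finset.univ) := by
        rintro ⟨-, himg⟩
        have := (Finset.univ_nonempty (α := Fin (p : ℕ))).image (fun k => (i k : ℕ))
        rw [← himg] at this
        exact (Finset.not_nonempty_empty) this
      rw [if_neg hne, mul_zero]
    rw [hz, add_zero] at h
    exact h
  -- coefficients vanish
  have hx2 : ∀ (p₀ : (Finset.Icc 1 q : Finset ℕ)) (i₀ : Fin (p₀ : ℕ) → Fin d),
      Function.Injective i₀ → x.2 p₀ i₀ = 0 := by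
    intro p₀ i₀ hi₀
    have hvi₀ : Function.Injective fun k => (i₀ k : ℕ) := Fin.val_injective.comp hi₀
    set u : Finset ℕ := Finset.image (fun k => (i₀ k : ℕ)) Finset.univ with hudef
    have hp₀1 : 1 ≤ (p₀ : ℕ) := (Finset.mem_Icc.mp p₀.2).1
    haveI : Nonempty (Fin (p₀ : ℕ)) := ⟨⟨0, lt_of_lt_of_le zero_lt_one hp₀1⟩⟩
    have hune : u ≠ ∅ :=
      ((Finset.univ_nonempty (α := Fin (p₀ : ℕ))).image fun k => (i₀ k : ℕ)).ne_empty
    have hcard : u.card = (p₀ : ℕ) := by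
      rw [hudef, Finset.card_image_of_injective _ hvi₀, Finset.card_univ, Fintype.card_fin]
    set A : ℝ := ∏ j ∈ u, aval μ X j with hAdef
    have hA : A ≠ 0 :=
      Finset.prod_ne_zero_iff.mpr fun j _ => aval_ne hint hmean hnondeg j
    have h := master u
    rw [if_neg hune, mul_zero, zero_add] at h
    -- outer sum reduces to p₀
    rw [Finset.sum_eq_single_of_mem p₀ (Finset.mem_univ _) ?hother] at h
    case hother =>
      intro p _ hpne
      refine Finset.sum_eq_zero fun i _ => ?_
      by_cases hc : x.2 p i = 0
      · simp [hc]
      · have hi : Function.Injective i := by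
          by_contra hni; exact hc ((hx p).2 i hni)
        have hvi : Function.Injective fun k => (i k : ℕ) := Fin.val_injective.comp hi
        have hcond : ¬ (Function.Injective i ∧
            u = Finset.image (fun k => (i k : ℕ)) Finset.univ) := by
          rintro ⟨-, himg⟩
          apply hpne
          apply Subtype.ext
          have : u.card = (p : ℕ) := by
            rw [himg, Finset.card_image_of_injective _ hvi, Finset.card_univ,
              Fintype.card_fin]
          rw [hcard] at this
          exact this.symm
        rw [if_neg hcond, mul_zero]
    -- inner sum at p₀
    have hinner : ∑ i : Fin ((p₀ : ℕ)) → Fin d,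
        x.2 p₀ i * (if Function.Injective i ∧
            u = Finset.image (fun k => (i k : ℕ)) Finset.univ
          then A else 0)
        = ∑ i : Fin ((p₀ : ℕ)) → Fin d,
            (if u = Finset.image (fun k => (i k : ℕ)) Finset.univ
              then x.2 p₀ i₀ * A else 0) := by
      refine Finset.sum_congr rfl fun i _ => ?_
      by_cases hcond : u = Finset.image (fun k => (i k : ℕ)) Finset.univ
      · have hvi : Function.Injective fun k => (i k : ℕ) := by
          have hcardi : (Finset.image (fun k => (i k : ℕ)) Finset.univ).card
              = (Finset.univ : Finset (Fin (p₀ : ℕ))).card := by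
            rw [← hcond, hcard, Finset.card_univ, Fintype.card_fin]
          have hinj : Set.InjOn (fun k => (i k : ℕ)) (Finset.univ : Finset (Fin (p₀:ℕ))) :=
            Finset.injOn_of_card_image_eq hcardi
          intro a b hab
          exact hinj (Finset.mem_coe.mpr (Finset.mem_univ a))
            (Finset.mem_coe.mpr (Finset.mem_univ b)) hab
        have hi : Function.Injective i := fun a b hab => hvi (congrArg Fin.val hab)
        obtain ⟨σ, hσ⟩ := exists_perm_comp hvi₀ hvi (by rw [← hudef, ← hcond])
        have hieq : i = i₀ ∘ σ := by
          funext k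
          apply Fin.val_injective
          exact congrFun hσ k
        have hcoef : x.2 p₀ i = x.2 p₀ i₀ := by
          rw [hieq]; exact (hx p₀).1 σ i₀
        rw [if_pos ⟨hi, hcond⟩, if_pos hcond, hcoef]
      · rw [if_neg (fun hh => hcond hh.2), if_neg hcond, mul_zero]
    rw [hinner, ← Finset.sum_filter, Finset.sum_const, nsmul_eq_mul] at h
    have hmem : i₀ ∈ Finset.filter
        (fun i : Fin (p₀ : ℕ) → Fin d =>
          u = Finset.image (fun k => (i k : ℕ)) Finset.univ) Finset.univ := by
      simp [hudef]
    have hcpos : 0 < (Finset.filter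
        (fun i : Fin (p₀ : ℕ) → Fin d =>
          u = Finset.image (fun k => (i k : ℕ)) Finset.univ) Finset.univ).card :=
      Finset.card_pos.mpr ⟨i₀, hmem⟩
    have hmul0 : x.2 p₀ i₀ * A = 0 := by
      rcases mul_eq_zero.mp h with hh | hh
      · exact absurd hh (Nat.cast_ne_zero.mpr hcpos.ne')
      · exact hh
    exact (mul_eq_zero.mp hmul0).resolve_right hA
  -- conclude
  have hx2' : x.2 = 0 := by
    funext p i
    by_cases hi : Function.Injective i
    · exact hx2 p i hi
    · exact (hx p).2 i hi
  have : x = (x.1, x.2) := rfl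
  rw [this, hx1, hx2']
  rfl

end Inj

/-- **Theorem (unbounded case).** Let `X` be a sequence of independent integrable centered
non-deterministic random variables, and let the kernels `f_{p,n}` all be supported in
`{0, …, d-1}^p` for a fixed `d > q`. If `Fₙ = E[Fₙ] + ∑_{p=1}^q Q_p(f_{p,n}; X)` converges
a.s. to `F = E[F] + ∑_{p=1}^q Q_p(f_p; X)`, then `E[Fₙ] → E[F]` and each chaotic component
`Q_p(f_{p,n}; X)` converges a.s. to `Q_p(f_p; X)`. -/
theorem stmt1 {Ω : Type*} [MeasurableSpace Ω] (μ : Measure Ω) [IsProbabilityMeasure μ]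
    (q : ℕ) (hq : 2 ≤ q)
    (X : ℕ → Ω → ℝ) (hXmeas : ∀ k, Measurable (X k))
    (hXindep : iIndepFun X μ)
    (hXint : ∀ k, Integrable (X k) μ)
    (hXmean : ∀ k, ∫ ω, X k ω ∂μ = 0)
    (hXnondeg : ∀ k, ¬ ∃ c : ℝ, X k =ᵐ[μ] fun _ => c)
    (d : ℕ) (hd : q < d)
    (f : ℕ → (p : ℕ) → (Fin p → ℕ) → ℝ)
    (flim : (p : ℕ) → (Fin p → ℕ) → ℝ)
    (hf : ∀ n, ∀ p ∈ Finset.Icc 1 q, IsKernel (f n p))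
    (hflim : ∀ p ∈ Finset.Icc 1 q, IsKernel (flim p))
    (hfsupp : ∀ n, ∀ p ∈ Finset.Icc 1 q, ∀ i : Fin p → ℕ, (∃ k, d ≤ i k) → f n p i = 0)
    (hflimsupp : ∀ p ∈ Finset.Icc 1 q, ∀ i : Fin p → ℕ, (∃ k, d ≤ i k) → flim p i = 0)
    (F : ℕ → Ω → ℝ) (Flim : Ω → ℝ)
    (hFint : ∀ n, Integrable (F n) μ) (hFlimint : Integrable Flim μ)
    (hF : ∀ n, ∀ᵐ ω ∂μ,
      F n ω = (∫ ω', F n ω' ∂μ) + ∑ p ∈ Finset.Icc 1 q, homSum p d (f n p) X ω)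
    (hFlim : ∀ᵐ ω ∂μ,
      Flim ω = (∫ ω', Flim ω' ∂μ) + ∑ p ∈ Finset.Icc 1 q, homSum p d (flim p) X ω)
    (hconv : ∀ᵐ ω ∂μ, Tendsto (fun n => F n ω) atTop (nhds (Flim ω))) :
    Tendsto (fun n => ∫ ω, F n ω ∂μ) atTop (nhds (∫ ω, Flim ω ∂μ)) ∧
    ∀ p ∈ Finset.Icc 1 q, ∀ᵐ ω ∂μ,
      Tendsto (fun n => homSum p d (f n p) X ω) atTop (nhds (homSum p d (flim p) X ω)) := by
  classical
  let cW : ℕ → Wsp q d := fun n =>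
    (∫ ω, F n ω ∂μ, fun p i => f n (p : ℕ) (fun k => (i k : ℕ)))
  let cWlim : Wsp q d :=
    (∫ ω, Flim ω ∂μ, fun p i => flim (p : ℕ) (fun k => (i k : ℕ)))
  have hmem : ∀ n, cW n ∈ Usub q d := by
    intro n p
    obtain ⟨hsym, hdiag⟩ := hf n (p : ℕ) p.2
    constructor
    · intro σ i
      have := hsym σ (fun k => (i k : ℕ))
      simpa [cW, Function.comp_def] using this
    · intro i hi
      exact hdiag _ fun hinj => hi fun a b hab => hinj (congrArg Fin.val hab)
  have hmemlim : cWlim ∈ Usub q d := by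
    intro p
    obtain ⟨hsym, hdiag⟩ := hflim (p : ℕ) p.2
    constructor
    · intro σ i
      have := hsym σ (fun k => (i k : ℕ))
      simpa [cWlim, Function.comp_def] using this
    · intro i hi
      exact hdiag _ fun hinj => hi fun a b hab => hinj (congrArg Fin.val hab)
  let cU : ℕ → ↥(Usub q d) := fun n => ⟨cW n, hmem n⟩
  let cUlim : ↥(Usub q d) := ⟨cWlim, hmemlim⟩
  have hLW : ∀ (n : ℕ) (ω : Ω), LWfun q d X (cW n) ω
      = (∫ ω', F n ω' ∂μ) + ∑ p ∈ Finset.Icc 1 q, homSum p d (f n p) X ω := by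
    intro n ω
    show (∫ ω', F n ω' ∂μ) + ∑ p : (Finset.Icc 1 q : Finset ℕ), ∑ i : Fin (p : ℕ) → Fin d,
        f n (p : ℕ) (fun k => (i k : ℕ)) * ∏ k, X (i k : ℕ) ω = _
    congr 1
    conv_rhs => rw [← Finset.sum_coe_sort (Finset.Icc 1 q)
      (fun p => homSum p d (f n p) X ω)]
    simp only [homSum]
  have hLWlim : ∀ ω : Ω, LWfun q d X cWlim ω
      = (∫ ω', Flim ω' ∂μ) + ∑ p ∈ Finset.Icc 1 q, homSum p d (flim p) X ω := by
    intro ω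
    show (∫ ω', Flim ω' ∂μ) + ∑ p : (Finset.Icc 1 q : Finset ℕ), ∑ i : Fin (p : ℕ) → Fin d,
        flim (p : ℕ) (fun k => (i k : ℕ)) * ∏ k, X (i k : ℕ) ω = _
    congr 1
    conv_rhs => rw [← Finset.sum_coe_sort (Finset.Icc 1 q)
      (fun p => homSum p d (flim p) X ω)]
    simp only [homSum]
  set Gd : Ω → Prop := fun ω => (∀ n, F n ω = LWfun q d X (cW n) ω) ∧
      Flim ω = LWfun q d X cWlim ω ∧ Tendsto (fun n => F n ω) atTop (nhds (Flim ω))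
    with hGddef
  have hGd : ∀ᵐ ω ∂μ, Gd ω := by
    filter_upwards [ae_all_iff.mpr hF, hFlim, hconv] with ω h1 h2 h3
    exact ⟨fun n => (h1 n).trans (hLW n ω).symm, h2.trans (hLWlim ω).symm, h3⟩
  set s : Set (Module.Dual ℝ ↥(Usub q d)) :=
    {ψ | ∃ ω, Gd ω ∧ ψ = (evW q d X ω).comp (Usub q d).subtype} with hsdef
  have hspan : Submodule.span ℝ s = ⊤ := by
    have hcoann : (Submodule.span ℝ s).dualCoannihilator = ⊥ := by
      rw [eq_bot_iff]
      intro u hu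
      rw [Submodule.mem_dualCoannihilator] at hu
      have h0 : ∀ᵐ ω ∂μ, LWfun q d X (u : Wsp q d) ω = 0 := by
        filter_upwards [hGd] with ω hω
        exact hu _ (Submodule.subset_span ⟨ω, hω, rfl⟩)
      have hz := inj_lemma hXindep hXmeas hXint hXmean hXnondeg q d u.1 u.2 h0
      exact (Submodule.mem_bot ℝ).mpr (Subtype.ext hz)
    have h1 := Subspace.finrank_add_finrank_dualCoannihilator_eq (Submodule.span ℝ s)
    rw [hcoann, finrank_bot, add_zero] at h1
    exact Submodule.eq_top_of_finrank_eq (h1.trans (Subspace.dual_finrank_eq).symm)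
  have hmain : ∀ δ : Module.Dual ℝ ↥(Usub q d),
      Tendsto (fun n => δ (cU n)) atTop (nhds (δ cUlim)) := by
    intro δ
    have hδ : δ ∈ Submodule.span ℝ s := by rw [hspan]; exact Submodule.mem_top
    obtain ⟨m, coef, g, hsumδ⟩ := Submodule.mem_span_set'.mp hδ
    have happ : ∀ z : ↥(Usub q d),
        δ z = ∑ i : Fin m, coef i * ((g i : Module.Dual ℝ ↥(Usub q d)) z) := by
      intro z
      rw [← hsumδ]
      simp [LinearMap.sum_apply, LinearMap.smul_apply, smul_eq_mul]
    simp only [happ]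
    apply tendsto_finset_sum
    intro i _
    obtain ⟨ω, hω, hψ⟩ := (g i).2
    have hev : ∀ n, ((g i : Module.Dual ℝ ↥(Usub q d)) (cU n)) = F n ω := by
      intro n
      rw [hψ]
      exact (hω.1 n).symm
    have hevlim : ((g i : Module.Dual ℝ ↥(Usub q d)) cUlim) = Flim ω := by
      rw [hψ]
      exact (hω.2.1).symm
    rw [hevlim]
    simp only [hev]
    exact (hω.2.2).const_mul _
  constructor
  · exact hmain ((LinearMap.fst ℝ ℝ _).comp (Usub q d).subtype)
  · intro p hp
    refine Filter.Eventually.of_forall fun ω => ?_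
    show Tendsto (fun n => ∑ i : Fin p → Fin d,
        f n p (fun k => (i k : ℕ)) * ∏ k, X (i k : ℕ) ω) atTop
      (nhds (∑ i : Fin p → Fin d, flim p (fun k => (i k : ℕ)) * ∏ k, X (i k : ℕ) ω))
    apply tendsto_finset_sum
    intro i _
    have hδ := hmain ((LinearMap.proj i).comp
      ((LinearMap.proj (⟨p, hp⟩ : (Finset.Icc 1 q : Finset ℕ))).comp
        ((LinearMap.snd ℝ ℝ _).comp (Usub q d).subtype)))
    exact hδ.mul_const _
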